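/- In a category equipped with an identity-on-objects involutive contravariant functor (−)° satisfying f°° = f, f ≫ f° ≫ f = f, and (f ≫ f°) ≫ (g ≫ g°) = (g ≫ g°) ≫ (f ≫ f°) for all parallel-domain f, g, the assignment f̄ := f ≫ f° defines a restriction structure, i.e. satisfies axioms [R.1]–[R.4]. -/
import Mathlib


open CategoryTheory

theorem inverse_gives_restriction {C : Type*} [Category C]
    (dag : ∀ {A B : C}, (A ⟶ B) → (B ⟶ A))
    (dag_id : ∀ A : C, dag (𝟙 A) = 𝟙 A)
    (dag_comp : ∀ {A B D : C} (f : A ⟶ B) (g : B ⟶ D), dag (f ≫ g) = dag g ≫ dag f)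
    (inv1 : ∀ {A B : C} (f : A ⟶ B), dag (dag f) = f)
    (inv2 : ∀ {A B : C} (f : A ⟶ B), f ≫ dag f ≫ f = f)
    (inv3 : ∀ {A B B' : C} (f : A ⟶ B) (g : A ⟶ B'),
      (f ≫ dag f) ≫ (g ≫ dag g) = (g ≫ dag g) ≫ (f ≫ dag f)) :
    (∀ (A B : C) (f : A ⟶ B), (f ≫ dag f) ≫ f = f) ∧
    (∀ (A B B' : C) (f : A ⟶ B) (g : A ⟶ B'),
      (f ≫ dag f) ≫ (g ≫ dag g) = (g ≫ dag g) ≫ (f ≫ dag f)) ∧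
    (∀ (A B B' : C) (f : A ⟶ B) (g : A ⟶ B'),
      ((g ≫ dag g) ≫ f) ≫ dag ((g ≫ dag g) ≫ f) = (f ≫ dag f) ≫ (g ≫ dag g)) ∧
    (∀ (A B D : C) (f : A ⟶ B) (g : B ⟶ D),
      f ≫ (g ≫ dag g) = ((f ≫ g) ≫ dag (f ≫ g)) ≫ f) := by
  have idem : ∀ {A B : C} (f : A ⟶ B), (f ≫ dag f) ≫ (f ≫ dag f) = f ≫ dag f := by
    intro A B f
    have h := inv2 (dag f)
    rw [inv1] at h
    rw [Category.assoc, h]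
  refine ⟨?_, ?_, ?_, ?_⟩
  · intro A B f
    rw [Category.assoc, inv2]
  · intro A B B' f g; exact inv3 f g
  · intro A B B' f g
    rw [dag_comp, dag_comp, inv1]
    simp only [Category.assoc]
    calc g ≫ dag g ≫ f ≫ dag f ≫ g ≫ dag g
        = g ≫ dag g ≫ ((f ≫ dag f) ≫ (g ≫ dag g)) := by simp only [Category.assoc]
      _ = g ≫ dag g ≫ ((g ≫ dag g) ≫ (f ≫ dag f)) := by rw [inv3]
      _ = ((g ≫ dag g) ≫ (g ≫ dag g)) ≫ (f ≫ dag f) := by simp only [Category.assoc]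
      _ = (g ≫ dag g) ≫ (f ≫ dag f) := by rw [idem]
      _ = (f ≫ dag f) ≫ (g ≫ dag g) := (inv3 f g).symm
      _ = f ≫ dag f ≫ g ≫ dag g := by simp only [Category.assoc]
  · intro A B D f g
    have comm := inv3 (dag f) g
    rw [inv1] at comm
    calc f ≫ (g ≫ dag g)
        = (f ≫ dag f ≫ f) ≫ (g ≫ dag g) := by rw [inv2]
      _ = f ≫ ((dag f ≫ f) ≫ (g ≫ dag g)) := by simp only [Category.assoc]
      _ = f ≫ ((g ≫ dag g) ≫ (dag f ≫ f)) := by rw [comm]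
      _ = ((f ≫ g) ≫ dag g ≫ dag f) ≫ f := by simp only [Category.assoc]
      _ = ((f ≫ g) ≫ dag (f ≫ g)) ≫ f := by rw [dag_comp]
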